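/- For every integer n ≥ 1 and every complex number s, the n-th derivative of the function t ↦ (-log(1-t))^s on (0,1) equals (1-t)^{-n} · Σ_{i=1}^{n} [n choose i]_Stirling1 · (s)_i · (-log(1-t))^{s-i}, where [n brack i] denotes the unsigned Stirling number of the first kind and (s)_i = s(s-1)⋯(s-i+1) is the falling factorial. -/

import Mathlib

open Finset

/-- Unsigned Stirling numbers of the first kind. -/
def stir : ℕ → ℕ → ℕ
  | 0, 0 => 1
  | 0, _ + 1 => 0
  | _ + 1, 0 => 0
  | n + 1, i + 1 => stir n i + n * stir n (i + 1)

/-- Falling factorial `(s)_i = s (s-1) ⋯ (s-i+1)`. -/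
def fall (i : ℕ) (s : ℂ) : ℂ := ∏ j ∈ Finset.range i, (s - j)

lemma fall_succ (i : ℕ) (s : ℂ) : fall (i+1) s = fall i s * (s - i) := by
  simp [fall, Finset.prod_range_succ]

lemma stir_zero (n : ℕ) (hn : 1 ≤ n) : stir n 0 = 0 := by
  cases n with
  | zero => omega
  | succ m => rfl

lemma stir_gt (n : ℕ) : ∀ i, n < i → stir n i = 0 := by
  induction n with
  | zero =>
    intro i hi
    cases i with
    | zero => omega
    | succ m => rfl
  | succ n ih =>
    intro i hi
    cases i with
    | zero => omega
    | succ m =>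
      show stir n m + n * stir n (m+1) = 0
      rw [ih m (by omega), ih (m+1) (by omega)]
      simp

lemma sum_helper (f : ℕ → ℂ) (hf : f 0 = 0) (m : ℕ) :
    ∑ i ∈ Finset.range (m+1), f i = ∑ i ∈ Finset.Icc 1 m, f i := by
  induction m with
  | zero => simp [hf]
  | succ m ih =>
    rw [Finset.sum_range_succ, ih, Finset.sum_Icc_succ_top (by omega)]

lemma key (n : ℕ) (hn : 1 ≤ n) (s x : ℂ) :
    ∑ i ∈ Finset.Icc 1 n, (stir n i : ℂ) * fall i s *
        ((n:ℂ) * x ^ (s - i) + (s - i) * x ^ (s - i - 1))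
      = ∑ i ∈ Finset.Icc 1 (n+1), (stir (n+1) i : ℂ) * fall i s * x ^ (s - i) := by
  have hz0 : (stir n 0 : ℂ) = 0 := by rw [stir_zero n hn]; simp
  have hz0' : (stir (n+1) 0 : ℂ) = 0 := by rw [stir_zero (n+1) (by omega)]; simp
  rw [← sum_helper _ (by simp [hz0]) n, ← sum_helper _ (by simp [hz0']) (n+1)]
  -- T : shifted sum equals unshifted sum
  have hT : ∑ j ∈ Finset.range (n+1), (stir n (j+1) : ℂ) * fall (j+1) s * x ^ (s - (j+1:ℕ))
      = ∑ j ∈ Finset.range (n+1), (stir n j : ℂ) * fall j s * x ^ (s - j) := by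
    have h2 := Finset.sum_range_succ' (fun j => (stir n j : ℂ) * fall j s * x ^ (s - j)) (n+1)
    rw [Finset.sum_range_succ] at h2
    have hlast : (stir n (n+1) : ℂ) = 0 := by rw [stir_gt n (n+1) (by omega)]; simp
    rw [hlast] at h2
    simp only [hz0, zero_mul, mul_zero, add_zero, zero_add] at h2
    exact h2.symm
  -- expand RHS via shift
  rw [Finset.sum_range_succ' (fun j => (stir (n+1) j : ℂ) * fall j s * x ^ (s - j)) (n+1)]
  simp only [hz0', zero_mul, add_zero]
  have hrec : ∀ j : ℕ, (stir (n+1) (j+1) : ℂ) = (stir n j : ℂ) + (n:ℂ) * (stir n (j+1) : ℂ) := by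
    intro j
    show ((stir n j + n * stir n (j+1) : ℕ) : ℂ) = _
    push_cast
    ring
  have hsplit : ∑ j ∈ Finset.range (n+1),
        (stir (n+1) (j+1) : ℂ) * fall (j+1) s * x ^ (s - (j+1:ℕ))
      = (∑ j ∈ Finset.range (n+1), (stir n j : ℂ) * fall (j+1) s * x ^ (s - (j+1:ℕ)))
        + (n:ℂ) * ∑ j ∈ Finset.range (n+1),
            (stir n (j+1) : ℂ) * fall (j+1) s * x ^ (s - (j+1:ℕ)) := by
    rw [Finset.mul_sum, ← Finset.sum_add_distrib]
    refine Finset.sum_congr rfl fun j _ => ?_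
    rw [hrec j]
    ring
  rw [hsplit, hT]
  rw [Finset.mul_sum, ← Finset.sum_add_distrib]
  refine Finset.sum_congr rfl fun j _ => ?_
  rw [fall_succ]
  have hexp : s - ((j+1:ℕ):ℂ) = s - j - 1 := by push_cast; ring
  rw [hexp]
  ring

lemma hasDerivAt_cpow_log (t : ℝ) (ht : t ∈ Set.Ioo (0:ℝ) 1) (c : ℂ) :
    HasDerivAt (fun t : ℝ => ((-Real.log (1-t) : ℝ) : ℂ) ^ c)
      (c * ((-Real.log (1-t):ℝ):ℂ)^(c-1) * ((1-t:ℝ):ℂ)⁻¹) t := by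
  obtain ⟨ht0, ht1⟩ := ht
  have h1 : (0:ℝ) < 1 - t := by linarith
  have hL : 0 < -Real.log (1-t) := by
    have := Real.log_neg h1 (by linarith)
    linarith
  have h1' : HasDerivAt (fun t:ℝ => 1 - t) (-1) t := by
    simpa using (hasDerivAt_id' t).const_sub (1:ℝ)
  have h2 : HasDerivAt (fun t:ℝ => -Real.log (1-t)) ((1-t)⁻¹) t := by
    have := ((Real.hasDerivAt_log (ne_of_gt h1)).comp t h1').neg
    refine this.congr_deriv ?_
    field_simp
  have h3 : HasDerivAt (fun t:ℝ => ((-Real.log (1-t) : ℝ) : ℂ)) (((1-t)⁻¹:ℝ):ℂ) t :=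
    h2.ofReal_comp
  have hmem : ((-Real.log (1-t) : ℝ) : ℂ) ∈ Complex.slitPlane :=
    Complex.ofReal_mem_slitPlane.2 hL
  have h4 := (Complex.hasStrictDerivAt_cpow_const (c := c) hmem).hasDerivAt.scomp t h3
  refine h4.congr_deriv ?_
  rw [smul_eq_mul]
  push_cast
  ring

lemma hasDerivAt_inv_pow (t : ℝ) (ht : t ∈ Set.Ioo (0:ℝ) 1) (n : ℕ) (hn : 1 ≤ n) :
    HasDerivAt (fun t : ℝ => (((1-t:ℝ):ℂ))⁻¹ ^ n)
      ((n:ℂ) * (((1-t:ℝ):ℂ))⁻¹ ^ (n+1)) t := by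
  obtain ⟨ht0, ht1⟩ := ht
  have h1 : (0:ℝ) < 1 - t := by linarith
  have hne : ((1-t:ℝ):ℂ) ≠ 0 := by
    simp only [ne_eq, Complex.ofReal_eq_zero]
    linarith
  have hA : HasDerivAt (fun t:ℝ => ((1-t:ℝ):ℂ)) (-1) t := by
    have : HasDerivAt (fun t:ℝ => 1 - t) (-1) t := by
      simpa using (hasDerivAt_id' t).const_sub (1:ℝ)
    simpa using this.ofReal_comp
  have hg : HasDerivAt (fun z : ℂ => z⁻¹ ^ n)
      ((n:ℂ) * (((1-t:ℝ):ℂ))⁻¹ ^ (n-1) * (-(((1-t:ℝ):ℂ) ^ 2)⁻¹)) ((1-t:ℝ):ℂ) :=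
    (hasDerivAt_inv hne).pow n
  have h5 := hg.scomp t hA
  refine h5.congr_deriv ?_
  rw [smul_eq_mul, show n+1 = n-1+2 by omega]
  ring

theorem stmt_0 (n : ℕ) (hn : 1 ≤ n) (s : ℂ) (t : ℝ) (ht : t ∈ Set.Ioo (0:ℝ) 1) :
    iteratedDerivWithin n (fun t : ℝ => ((-Real.log (1 - t) : ℝ) : ℂ) ^ s)
        (Set.Ioo (0:ℝ) 1) t
      = (((1 - t : ℝ) : ℂ))⁻¹ ^ n *
          ∑ i ∈ Finset.Icc 1 n,
            (stir n i : ℂ) * fall i s * ((-Real.log (1 - t) : ℝ) : ℂ) ^ (s - i) := by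
  have hopen : IsOpen (Set.Ioo (0:ℝ) 1) := isOpen_Ioo
  have huniq : UniqueDiffOn ℝ (Set.Ioo (0:ℝ) 1) := hopen.uniqueDiffOn
  induction n, hn using Nat.le_induction generalizing t with
  | base =>
    rw [iteratedDerivWithin_one]
    rw [derivWithin_of_isOpen hopen ht]
    have := (hasDerivAt_cpow_log t ht s).deriv
    rw [this]
    have h1 : stir 1 1 = 1 := rfl
    simp only [Finset.Icc_self, Finset.sum_singleton, h1, Nat.cast_one, one_mul, pow_one]
    rw [show fall 1 s = s by simp [fall]]
    push_cast
    ring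
  | succ n hn ih =>
    rw [iteratedDerivWithin_succ]
    rw [derivWithin_of_isOpen hopen ht]
    set L : ℝ → ℂ := fun t => ((-Real.log (1-t) : ℝ) : ℂ) with hLdef
    set F : ℝ → ℂ := fun t => (((1 - t : ℝ) : ℂ))⁻¹ ^ n *
          ∑ i ∈ Finset.Icc 1 n,
            (stir n i : ℂ) * fall i s * ((-Real.log (1 - t) : ℝ) : ℂ) ^ (s - i) with hFdef
    have heq : Set.EqOn (iteratedDerivWithin n
        (fun t : ℝ => ((-Real.log (1 - t) : ℝ) : ℂ) ^ s) (Set.Ioo (0:ℝ) 1)) F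
        (Set.Ioo (0:ℝ) 1) := fun u hu => ih u hu
    have hev : iteratedDerivWithin n
        (fun t : ℝ => ((-Real.log (1 - t) : ℝ) : ℂ) ^ s) (Set.Ioo (0:ℝ) 1)
        =ᶠ[nhds t] F := heq.eventuallyEq_of_mem (hopen.mem_nhds ht)
    rw [hev.deriv_eq]
    -- compute deriv F t
    have hP := hasDerivAt_inv_pow t ht n hn
    have hS : HasDerivAt (fun t : ℝ => ∑ i ∈ Finset.Icc 1 n,
          (stir n i : ℂ) * fall i s * ((-Real.log (1 - t) : ℝ) : ℂ) ^ (s - i))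
        (∑ i ∈ Finset.Icc 1 n, (stir n i : ℂ) * fall i s *
          ((s - i) * ((-Real.log (1 - t) : ℝ) : ℂ) ^ (s - i - 1) * ((1-t:ℝ):ℂ)⁻¹)) t :=
      HasDerivAt.fun_sum fun (i : ℕ) _ =>
        ((hasDerivAt_cpow_log t ht (s - i)).const_mul ((stir n i : ℂ) * fall i s))
    have hD := hP.mul hS
    rw [show deriv F t = _ from hD.deriv]
    -- algebra
    have halg : (n:ℂ) * (((1-t:ℝ):ℂ))⁻¹ ^ (n+1) *
          (∑ i ∈ Finset.Icc 1 n, (stir n i : ℂ) * fall i s *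
            ((-Real.log (1 - t) : ℝ) : ℂ) ^ (s - i))
        + (((1-t:ℝ):ℂ))⁻¹ ^ n *
          (∑ i ∈ Finset.Icc 1 n, (stir n i : ℂ) * fall i s *
            ((s - i) * ((-Real.log (1 - t) : ℝ) : ℂ) ^ (s - i - 1) * ((1-t:ℝ):ℂ)⁻¹))
        = (((1-t:ℝ):ℂ))⁻¹ ^ (n+1) *
          ∑ i ∈ Finset.Icc 1 n, (stir n i : ℂ) * fall i s *
            ((n:ℂ) * ((-Real.log (1 - t) : ℝ) : ℂ) ^ (s - i)
              + (s - i) * ((-Real.log (1 - t) : ℝ) : ℂ) ^ (s - i - 1)) := by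
      rw [Finset.mul_sum, Finset.mul_sum, Finset.mul_sum, ← Finset.sum_add_distrib]
      refine Finset.sum_congr rfl fun i _ => ?_
      ring
    rw [halg, key n hn s _]
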